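/- Let q be twice differentiable with q''(t) = 2q(t)^3 + tq(t), q nonvanishing, g = q^2, u = (q')^2 - tg - g^2, u nonvanishing. Then (g/u)''(t) = 3 g(t) g'(t)/u(t)^2 + 2 (g(t)/u(t))^3 + 6 g(t)^2/u(t) + 4 t g(t)/u(t) + 2 for all t. -/

import Mathlib

/-- For `g = q²`, `u = (q')² - tg - g²` with `q` a nonvanishing Painlevé II
solution and `u` nonvanishing:
`(g/u)'' = 3gg'/u² + 2(g/u)³ + 6g²/u + 4tg/u + 2`. -/
theorem stmt_7 (q q' q'' : ℝ → ℝ)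
    (hq : ∀ t, HasDerivAt q (q' t) t)
    (hq' : ∀ t, HasDerivAt q' (q'' t) t)
    (hPII : ∀ t, q'' t = 2 * q t ^ 3 + t * q t)
    (hqne : ∀ t, q t ≠ 0)
    (hune : ∀ t, q' t ^ 2 - t * q t ^ 2 - (q t ^ 2) ^ 2 ≠ 0) :
    ∀ t, deriv (deriv (fun s => q s ^ 2 / (q' s ^ 2 - s * q s ^ 2 - (q s ^ 2) ^ 2))) t
      = 3 * q t ^ 2 * deriv (fun s => q s ^ 2) t
          / (q' t ^ 2 - t * q t ^ 2 - (q t ^ 2) ^ 2) ^ 2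
        + 2 * (q t ^ 2 / (q' t ^ 2 - t * q t ^ 2 - (q t ^ 2) ^ 2)) ^ 3
        + 6 * (q t ^ 2) ^ 2 / (q' t ^ 2 - t * q t ^ 2 - (q t ^ 2) ^ 2)
        + 4 * t * q t ^ 2 / (q' t ^ 2 - t * q t ^ 2 - (q t ^ 2) ^ 2)
        + 2 := by
  set U : ℝ → ℝ := fun s => q' s ^ 2 - s * q s ^ 2 - (q s ^ 2) ^ 2 with hUdef
  have hG : ∀ t, HasDerivAt (fun s => q s ^ 2) (2 * q t * q' t) t := by
    intro t
    have := (hq t).fun_pow 2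
    simpa [mul_comm, mul_assoc] using this
  have hU : ∀ t, HasDerivAt U (-(q t ^ 2)) t := by
    intro t
    have h := (((hq' t).fun_pow 2).fun_sub ((hasDerivAt_id' t).fun_mul (hG t))).fun_sub ((hG t).fun_pow 2)
    refine h.congr_deriv ?_
    simp only [hPII t, id_eq]
    ring
  have hf : ∀ t, HasDerivAt (fun s => q s ^ 2 / U s)
      ((2 * q t * q' t * U t - q t ^ 2 * (-(q t ^ 2))) / U t ^ 2) t := by
    intro t
    exact (hG t).div (hU t) (hune t)
  have hd1 : deriv (fun s => q s ^ 2 / U s)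
      = fun t => (2 * q t * q' t * U t - q t ^ 2 * (-(q t ^ 2))) / U t ^ 2 := by
    funext t; exact (hf t).deriv
  intro t
  have hNum : HasDerivAt (fun s => 2 * q s * q' s * U s - q s ^ 2 * (-(q s ^ 2)))
      (((0 * q t + 2 * q' t) * q' t + 2 * q t * q'' t) * U t
        + 2 * q t * q' t * (-(q t ^ 2))
        - (2 * q t * q' t * (-(q t ^ 2)) + q t ^ 2 * (-(2 * q t * q' t)))) t := by
    exact ((((hasDerivAt_const t (2:ℝ)).mul (hq t)).mul (hq' t)).mul (hU t)).sub
      ((hG t).mul ((hG t).neg))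
  have hDen : HasDerivAt (fun s => U s ^ 2) (2 * U t ^ 1 * (-(q t ^ 2))) t := (hU t).pow 2
  have hf2 := hNum.fun_div hDen (pow_ne_zero 2 (hune t))
  have hGd : deriv (fun s => q s ^ 2) t = 2 * q t * q' t := (hG t).deriv
  rw [hd1, hf2.deriv, hGd]
  have hu := hune t
  have hUt : U t = q' t ^ 2 - t * q t ^ 2 - (q t ^ 2) ^ 2 := rfl
  rw [hUt] at *
  simp only [hPII t]
  have hu2 : q' t ^ 2 - q t ^ 2 * t - q t ^ 4 ≠ 0 := by convert hu using 1; ring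
  field_simp
  ring
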